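/- Let L ≥ 1, let ψ_1,…,ψ_L be real numbers, and let Δθ_1,…,Δθ_L be independent real-valued random variables with E[cos Δθ_ℓ] = χ and E[sin Δθ_ℓ] = 0 for all ℓ. Then E[|Σ_{ℓ=1}^L e^{i(ψ_ℓ + Δθ_ℓ)}|²] = L + 2χ² Σ_{1 ≤ m < n ≤ L} cos(ψ_n − ψ_m). -/

import Mathlib

open MeasureTheory ProbabilityTheory Complex Finset

section helper
variable {Ω : Type*} [MeasurableSpace Ω] {μ : Measure Ω} [IsProbabilityMeasure μ]

lemma bdd_int {f : Ω → ℝ} (hf : Measurable f) (hb : ∀ ω, |f ω| ≤ 1) : Integrable f μ :=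
  (integrable_const (1:ℝ)).mono' hf.aestronglyMeasurable (ae_of_all _ (by simpa using hb))

lemma cross_int (X Y : Ω → ℝ) (hX : Measurable X) (hY : Measurable Y)
    (hind : IndepFun X Y μ) (χ : ℝ)
    (hcX : ∫ ω, Real.cos (X ω) ∂μ = χ) (hcY : ∫ ω, Real.cos (Y ω) ∂μ = χ)
    (hsX : ∫ ω, Real.sin (X ω) ∂μ = 0) (hsY : ∫ ω, Real.sin (Y ω) ∂μ = 0) (a : ℝ) :
    ∫ ω, Real.cos (a + (X ω - Y ω)) ∂μ = χ ^ 2 * Real.cos a := by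
  have hcc : IndepFun (fun ω => Real.cos (X ω)) (fun ω => Real.cos (Y ω)) μ :=
    hind.comp Real.measurable_cos Real.measurable_cos
  have hcs : IndepFun (fun ω => Real.cos (X ω)) (fun ω => Real.sin (Y ω)) μ :=
    hind.comp Real.measurable_cos Real.measurable_sin
  have hsc : IndepFun (fun ω => Real.sin (X ω)) (fun ω => Real.cos (Y ω)) μ :=
    hind.comp Real.measurable_sin Real.measurable_cos
  have hss : IndepFun (fun ω => Real.sin (X ω)) (fun ω => Real.sin (Y ω)) μ :=
    hind.comp Real.measurable_sin Real.measurable_sin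
  have mb : ∀ (f g : ℝ → ℝ) (Z : Ω → ℝ), Measurable f → Measurable g → Measurable Z →
      (∀ x, |f x| ≤ 1) → (∀ x, |g x| ≤ 1) →
      Integrable (fun ω => f (X ω) * g (Z ω)) μ := by
    intro f g Z hf hg hZ hbf hbg
    refine bdd_int ((hf.comp hX).mul (hg.comp hZ)) fun ω => ?_
    rw [abs_mul]
    exact mul_le_one₀ (hbf _) (abs_nonneg _) (hbg _)
  have Icc : Integrable (fun ω => Real.cos (X ω) * Real.cos (Y ω)) μ :=
    mb _ _ _ Real.measurable_cos Real.measurable_cos hY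
      (fun x => Real.abs_cos_le_one x) (fun x => Real.abs_cos_le_one x)
  have Iss : Integrable (fun ω => Real.sin (X ω) * Real.sin (Y ω)) μ :=
    mb _ _ _ Real.measurable_sin Real.measurable_sin hY
      (fun x => Real.abs_sin_le_one x) (fun x => Real.abs_sin_le_one x)
  have Isc : Integrable (fun ω => Real.sin (X ω) * Real.cos (Y ω)) μ :=
    mb _ _ _ Real.measurable_sin Real.measurable_cos hY
      (fun x => Real.abs_sin_le_one x) (fun x => Real.abs_cos_le_one x)
  have Ics : Integrable (fun ω => Real.cos (X ω) * Real.sin (Y ω)) μ :=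
    mb _ _ _ Real.measurable_cos Real.measurable_sin hY
      (fun x => Real.abs_cos_le_one x) (fun x => Real.abs_sin_le_one x)
  have hpt : ∀ ω, Real.cos (a + (X ω - Y ω)) =
      Real.cos a * (Real.cos (X ω) * Real.cos (Y ω)) +
      Real.cos a * (Real.sin (X ω) * Real.sin (Y ω)) -
      (Real.sin a * (Real.sin (X ω) * Real.cos (Y ω)) -
       Real.sin a * (Real.cos (X ω) * Real.sin (Y ω))) := by
    intro ω
    rw [Real.cos_add, Real.cos_sub, Real.sin_sub]
    ring
  rw [integral_congr_ae (ae_of_all _ hpt)]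
  have I1 : Integrable (fun ω => Real.cos a * (Real.cos (X ω) * Real.cos (Y ω)) +
      Real.cos a * (Real.sin (X ω) * Real.sin (Y ω))) μ :=
    (Icc.const_mul _).add (Iss.const_mul _)
  have I2 : Integrable (fun ω => Real.sin a * (Real.sin (X ω) * Real.cos (Y ω)) -
      Real.sin a * (Real.cos (X ω) * Real.sin (Y ω))) μ :=
    (Isc.const_mul _).sub (Ics.const_mul _)
  rw [integral_sub I1 I2,
    integral_add (Icc.const_mul _) (Iss.const_mul _),
    integral_sub (Isc.const_mul _) (Ics.const_mul _),
    integral_const_mul, integral_const_mul, integral_const_mul, integral_const_mul,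
    hcc.integral_fun_mul_eq_mul_integral ((Real.measurable_cos.comp hX).aestronglyMeasurable)
      ((Real.measurable_cos.comp hY).aestronglyMeasurable),
    hss.integral_fun_mul_eq_mul_integral ((Real.measurable_sin.comp hX).aestronglyMeasurable)
      ((Real.measurable_sin.comp hY).aestronglyMeasurable),
    hsc.integral_fun_mul_eq_mul_integral ((Real.measurable_sin.comp hX).aestronglyMeasurable)
      ((Real.measurable_cos.comp hY).aestronglyMeasurable),
    hcs.integral_fun_mul_eq_mul_integral ((Real.measurable_cos.comp hX).aestronglyMeasurable)
      ((Real.measurable_sin.comp hY).aestronglyMeasurable),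
    hcX, hcY, hsX, hsY]
  ring

lemma abs_sum_exp_sq (L : ℕ) (θ : Fin L → ℝ) :
    ‖∑ ℓ : Fin L, Complex.exp (Complex.I * (θ ℓ : ℂ))‖ ^ 2 =
      ∑ ℓ : Fin L, ∑ n : Fin L, Real.cos (θ ℓ - θ n) := by
  have hre : (∑ ℓ : Fin L, Complex.exp (Complex.I * (θ ℓ : ℂ))).re =
      ∑ ℓ : Fin L, Real.cos (θ ℓ) := by
    rw [Complex.re_sum]
    refine Finset.sum_congr rfl fun ℓ _ => ?_
    rw [mul_comm, Complex.exp_ofReal_mul_I_re]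
  have him : (∑ ℓ : Fin L, Complex.exp (Complex.I * (θ ℓ : ℂ))).im =
      ∑ ℓ : Fin L, Real.sin (θ ℓ) := by
    rw [Complex.im_sum]
    refine Finset.sum_congr rfl fun ℓ _ => ?_
    rw [mul_comm, Complex.exp_ofReal_mul_I_im]
  rw [Complex.sq_norm, Complex.normSq_apply, hre, him, Finset.sum_mul_sum, Finset.sum_mul_sum,
    ← Finset.sum_add_distrib]
  refine Finset.sum_congr rfl fun ℓ _ => ?_
  rw [← Finset.sum_add_distrib]
  refine Finset.sum_congr rfl fun n _ => ?_
  rw [Real.cos_sub]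

lemma split_sum (L : ℕ) (g : Fin L → Fin L → ℝ) (hsymm : ∀ ℓ n, g ℓ n = g n ℓ) :
    ∑ ℓ : Fin L, ∑ n : Fin L, g ℓ n =
      ∑ ℓ : Fin L, g ℓ ℓ +
        2 * ∑ n : Fin L, ∑ m ∈ Finset.univ.filter (fun m => m < n), g m n := by
  have hpt : ∀ ℓ n : Fin L, g ℓ n =
      (if n < ℓ then g ℓ n else 0) + (if ℓ < n then g ℓ n else 0) +
        (if ℓ = n then g ℓ n else 0) := by
    intro ℓ n
    rcases lt_trichotomy ℓ n with h | h | h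
    · simp [h, ne_of_lt h, asymm h]
    · simp [h, lt_irrefl]
    · simp [h, (ne_of_lt h).symm, asymm h]
  calc ∑ ℓ : Fin L, ∑ n : Fin L, g ℓ n
      = ∑ ℓ : Fin L, ∑ n : Fin L, ((if n < ℓ then g ℓ n else 0) +
          (if ℓ < n then g ℓ n else 0) + (if ℓ = n then g ℓ n else 0)) := by
        exact Finset.sum_congr rfl fun ℓ _ => Finset.sum_congr rfl fun n _ => hpt ℓ n
    _ = (∑ ℓ : Fin L, ∑ n : Fin L, (if n < ℓ then g ℓ n else 0)) +
        (∑ ℓ : Fin L, ∑ n : Fin L, (if ℓ < n then g ℓ n else 0)) +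
        (∑ ℓ : Fin L, ∑ n : Fin L, (if ℓ = n then g ℓ n else 0)) := by
        simp [Finset.sum_add_distrib]
    _ = ∑ ℓ : Fin L, g ℓ ℓ +
        2 * ∑ n : Fin L, ∑ m ∈ Finset.univ.filter (fun m => m < n), g m n := by
        have h3 : (∑ ℓ : Fin L, ∑ n : Fin L, (if ℓ = n then g ℓ n else 0)) =
            ∑ ℓ : Fin L, g ℓ ℓ := by
          refine Finset.sum_congr rfl fun ℓ _ => ?_
          simp
        have h1 : (∑ ℓ : Fin L, ∑ n : Fin L, (if n < ℓ then g ℓ n else 0)) =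
            ∑ n : Fin L, ∑ m ∈ Finset.univ.filter (fun m => m < n), g m n := by
          refine Finset.sum_congr rfl fun ℓ _ => ?_
          rw [Finset.sum_filter]
          exact Finset.sum_congr rfl fun n _ => by rw [hsymm]
        have h2 : (∑ ℓ : Fin L, ∑ n : Fin L, (if ℓ < n then g ℓ n else 0)) =
            ∑ n : Fin L, ∑ m ∈ Finset.univ.filter (fun m => m < n), g m n := by
          rw [Finset.sum_comm]
          refine Finset.sum_congr rfl fun n _ => ?_
          rw [Finset.sum_filter]
        rw [h1, h2, h3]
        ring

end helper

theorem expected_squared_modulus_phase_noise {Ω : Type*} [MeasurableSpace Ω] (μ : Measure Ω)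
    [IsProbabilityMeasure μ] (L : ℕ) (hL : 1 ≤ L) (ψ : Fin L → ℝ) (Δθ : Fin L → Ω → ℝ)
    (hmeas : ∀ ℓ, Measurable (Δθ ℓ))
    (hindep : ProbabilityTheory.iIndepFun Δθ μ) (χ : ℝ)
    (hcos : ∀ ℓ, ∫ ω, Real.cos (Δθ ℓ ω) ∂μ = χ)
    (hsin : ∀ ℓ, ∫ ω, Real.sin (Δθ ℓ ω) ∂μ = 0) :
    ∫ ω, ‖∑ ℓ : Fin L, Complex.exp (Complex.I * ((ψ ℓ + Δθ ℓ ω : ℝ) : ℂ))‖ ^ 2 ∂μ =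
      (L : ℝ) + 2 * χ ^ 2 * ∑ n : Fin L, ∑ m ∈ Finset.univ.filter (fun m => m < n),
        Real.cos (ψ n - ψ m) := by
  have step1 : ∀ ω, ‖∑ ℓ : Fin L,
      Complex.exp (Complex.I * ((ψ ℓ + Δθ ℓ ω : ℝ) : ℂ))‖ ^ 2 =
      ∑ ℓ : Fin L, ∑ n : Fin L,
        Real.cos ((ψ ℓ + Δθ ℓ ω) - (ψ n + Δθ n ω)) := fun ω =>
    abs_sum_exp_sq L (fun ℓ => ψ ℓ + Δθ ℓ ω)
  rw [integral_congr_ae (ae_of_all _ step1)]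
  have hint : ∀ ℓ n : Fin L, Integrable
      (fun ω => Real.cos ((ψ ℓ + Δθ ℓ ω) - (ψ n + Δθ n ω))) μ := by
    intro ℓ n
    exact bdd_int (Real.measurable_cos.comp
      (((measurable_const.add (hmeas ℓ)).sub (measurable_const.add (hmeas n)))))
      (fun ω => Real.abs_cos_le_one _)
  rw [integral_finset_sum _ (fun ℓ _ => integrable_finset_sum _ (fun n _ => hint ℓ n))]
  have hterm : ∀ ℓ n : Fin L,
      (∫ ω, Real.cos ((ψ ℓ + Δθ ℓ ω) - (ψ n + Δθ n ω)) ∂μ) =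
      if ℓ = n then 1 else χ ^ 2 * Real.cos (ψ ℓ - ψ n) := by
    intro ℓ n
    by_cases h : ℓ = n
    · subst h
      simp
    · have hpt : ∀ ω, (ψ ℓ + Δθ ℓ ω) - (ψ n + Δθ n ω) =
        (ψ ℓ - ψ n) + (Δθ ℓ ω - Δθ n ω) := fun ω => by ring
      simp only [hpt, if_neg h]
      exact cross_int (Δθ ℓ) (Δθ n) (hmeas ℓ) (hmeas n)
        (hindep.indepFun h) χ (hcos ℓ) (hcos n) (hsin ℓ) (hsin n) (ψ ℓ - ψ n)
  have : (∑ ℓ : Fin L, ∫ ω, (∑ n : Fin L,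
      Real.cos ((ψ ℓ + Δθ ℓ ω) - (ψ n + Δθ n ω))) ∂μ) =
      ∑ ℓ : Fin L, ∑ n : Fin L, (if ℓ = n then (1:ℝ) else χ ^ 2 * Real.cos (ψ ℓ - ψ n)) := by
    refine Finset.sum_congr rfl fun ℓ _ => ?_
    rw [integral_finset_sum _ (fun n _ => hint ℓ n)]
    exact Finset.sum_congr rfl fun n _ => hterm ℓ n
  rw [this]
  rw [split_sum L _ (fun ℓ n => by
    rcases eq_or_ne ℓ n with h | h
    · simp [h]
    · simp only [if_neg h, if_neg (Ne.symm h), Real.cos_sub_cos]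
      rw [← Real.cos_neg (ψ ℓ - ψ n)]
      ring_nf)]
  have h1 : (∑ ℓ : Fin L, (if ℓ = ℓ then (1:ℝ) else χ ^ 2 * Real.cos (ψ ℓ - ψ ℓ))) = (L:ℝ) := by
    simp
  have h2 : (∑ n : Fin L, ∑ m ∈ Finset.univ.filter (fun m => m < n),
      (if m = n then (1:ℝ) else χ ^ 2 * Real.cos (ψ m - ψ n))) =
      χ ^ 2 * ∑ n : Fin L, ∑ m ∈ Finset.univ.filter (fun m => m < n), Real.cos (ψ n - ψ m) := by
    rw [Finset.mul_sum]
    refine Finset.sum_congr rfl fun n _ => ?_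
    rw [Finset.mul_sum]
    refine Finset.sum_congr rfl fun m hm => ?_
    rw [if_neg (ne_of_lt (Finset.mem_filter.mp hm).2), ← neg_sub (ψ n) (ψ m), Real.cos_neg]
  rw [h1, h2]
  ring
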